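/- The iterated blow-up of a single hyperedge, the 3-graph E_n defined recursively by partitioning [n] into three nearly equal parts, taking all crossing triples with one vertex in each part, and recursing inside each part, contains no pseudo-cycle minus one hyperedge of size ℓ for any ℓ ≥ 4 with 3 ∤ ℓ. -/
import Mathlib


/-- The iterated blow-up of a single hyperedge, on vertex set `{0, …, n-1}`:
partition into `V₁ = [0, n/3)`, `V₂ = [n/3, n/3 + (n+1)/3)`, `V₃` the rest
(of sizes `⌊n/3⌋`, `⌊(n+1)/3⌋`, `⌊(n+2)/3⌋`), take all crossing triples, and
recurse inside each part. -/
def iterE : ℕ → Finset (Finset ℕ)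
  | n =>
    if h : n ≤ 2 then ∅
    else
      ((Finset.range (n / 3) ×ˢ
          Finset.Ico (n / 3) (n / 3 + (n + 1) / 3) ×ˢ
          Finset.Ico (n / 3 + (n + 1) / 3) n).image
        (fun p => ({p.1, p.2.1, p.2.2} : Finset ℕ)))
      ∪ iterE (n / 3)
      ∪ (iterE ((n + 1) / 3)).image (fun e => e.image (· + n / 3))
      ∪ (iterE ((n + 2) / 3)).image (fun e => e.image (· + (n / 3 + (n + 1) / 3)))
  decreasing_by all_goals omega

/-- `H` contains a pseudo-cycle minus one hyperedge of size `ℓ`. -/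
def HasPseudoCycleMinus (H : Finset (Finset ℕ)) (ℓ : ℕ) : Prop :=
  ∃ v : ℕ → ℕ, ∀ i, i + 2 ≤ ℓ →
    ({v i, v ((i + 1) % ℓ), v ((i + 2) % ℓ)} : Finset ℕ) ∈ H

/-- The part (0, 1 or 2) of a vertex at the top level of `iterE n`. -/
def partn (n x : ℕ) : ℕ :=
  if x < n / 3 then 0 else if x < n / 3 + (n + 1) / 3 then 1 else 2

lemma partn_lt (n x : ℕ) : partn n x < 3 := by
  unfold partn; split_ifs <;> omega

lemma partn_eq0 (n x : ℕ) (h : x < n / 3) : partn n x = 0 := by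
  unfold partn; split_ifs <;> omega

lemma partn_eq1 (n x : ℕ) (h1 : n / 3 ≤ x) (h2 : x < n / 3 + (n + 1) / 3) :
    partn n x = 1 := by
  unfold partn; split_ifs <;> omega

lemma partn_eq2 (n x : ℕ) (h1 : n / 3 + (n + 1) / 3 ≤ x) : partn n x = 2 := by
  unfold partn; split_ifs <;> omega

lemma iterE_subset_range : ∀ n, ∀ e ∈ iterE n, e ⊆ Finset.range n := by
  intro n
  induction n using Nat.strong_induction_on with
  | _ n ih =>
    intro e he
    rw [iterE] at he
    by_cases h : n ≤ 2
    · rw [dif_pos h] at he; simp at he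
    · rw [dif_neg h] at he
      simp only [Finset.mem_union, Finset.mem_image, Finset.mem_product,
        Finset.mem_range, Finset.mem_Ico] at he
      intro x hx
      rw [Finset.mem_range]
      rcases he with (((⟨⟨a, b, c⟩, ⟨ha, hb, hc⟩, rfl⟩ | he) | ⟨e', he', rfl⟩) | ⟨e', he', rfl⟩)
      · simp only [Finset.mem_insert, Finset.mem_singleton] at hx
        simp only at ha hb hc
        omega
      · have := ih (n / 3) (by omega) e he hx
        rw [Finset.mem_range] at this; omega
      · simp only [Finset.mem_image] at hx
        obtain ⟨y, hy, rfl⟩ := hx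
        have := ih ((n + 1) / 3) (by omega) e' he' hy
        rw [Finset.mem_range] at this; omega
      · simp only [Finset.mem_image] at hx
        obtain ⟨y, hy, rfl⟩ := hx
        have := ih ((n + 2) / 3) (by omega) e' he' hy
        rw [Finset.mem_range] at this; omega

lemma edge_dichotomy (n : ℕ) (hn : ¬ n ≤ 2) (a b c : ℕ)
    (he : ({a, b, c} : Finset ℕ) ∈ iterE n) :
    (partn n a ≠ partn n b ∧ partn n a ≠ partn n c ∧ partn n b ≠ partn n c) ∨
    (∃ k s m, ((k = 0 ∧ s = 0 ∧ m = n / 3) ∨ (k = 1 ∧ s = n / 3 ∧ m = (n + 1) / 3) ∨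
        (k = 2 ∧ s = n / 3 + (n + 1) / 3 ∧ m = (n + 2) / 3)) ∧
      partn n a = k ∧ partn n b = k ∧ partn n c = k ∧
      ({a - s, b - s, c - s} : Finset ℕ) ∈ iterE m ∧ m < n) := by
  rw [iterE, dif_neg hn] at he
  simp only [Finset.mem_union, Finset.mem_image, Finset.mem_product,
    Finset.mem_range, Finset.mem_Ico] at he
  rcases he with (((⟨⟨a', b', c'⟩, ⟨ha', hb', hc'⟩, heq⟩ | he) | ⟨e', he', heq⟩) | ⟨e', he', heq⟩)
  · -- crossing triple
    left
    simp only at ha' hb' hc' heq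
    have hne : a' ≠ b' ∧ a' ≠ c' ∧ b' ≠ c' := by omega
    have hmem : ∀ x ∈ ({a, b, c} : Finset ℕ), x = a' ∨ x = b' ∨ x = c' := by
      intro x hx
      rw [← heq] at hx
      simpa using hx
    have hcard : ({a, b, c} : Finset ℕ).card = 3 := by
      rw [← heq]
      rw [Finset.card_insert_of_notMem (by simp; omega),
        Finset.card_insert_of_notMem (by simp; omega), Finset.card_singleton]
    have hsub2 : ∀ x y : ℕ, ({x, y} : Finset ℕ).card ≤ 2 := fun x y =>
      le_trans (Finset.card_insert_le _ _) (by simp)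
    have hab : a ≠ b := by
      intro h; rw [h] at hcard
      have hss : ({b, b, c} : Finset ℕ) ⊆ {b, c} := by
        intro t ht; simp at ht ⊢; tauto
      have := Finset.card_le_card hss
      have := hsub2 b c
      omega
    have hac : a ≠ c := by
      intro h; rw [h] at hcard
      have hss : ({c, b, c} : Finset ℕ) ⊆ {c, b} := by
        intro t ht; simp at ht ⊢; tauto
      have := Finset.card_le_card hss
      have := hsub2 c b
      omega
    have hbc : b ≠ c := by
      intro h; rw [h] at hcard
      have hss : ({a, c, c} : Finset ℕ) ⊆ {a, c} := by
        intro t ht; simp at ht ⊢; tauto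
      have := Finset.card_le_card hss
      have := hsub2 a c
      omega
    have pa' : partn n a' = 0 := partn_eq0 _ _ ha'
    have pb' : partn n b' = 1 := partn_eq1 _ _ hb'.1 hb'.2
    have pc' : partn n c' = 2 := partn_eq2 _ _ hc'.1
    have hpair : ∀ x y : ℕ, x ∈ ({a, b, c} : Finset ℕ) → y ∈ ({a, b, c} : Finset ℕ) →
        x ≠ y → partn n x ≠ partn n y := by
      intro x y hx hy hxy
      have hx' := hmem x hx
      have hy' := hmem y hy
      rcases hx' with rfl | rfl | rfl <;> rcases hy' with rfl | rfl | rfl <;>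
        first
          | exact absurd rfl hxy
          | simp [pa', pb', pc']
    exact ⟨hpair a b (by simp) (by simp) hab, hpair a c (by simp) (by simp) hac,
      hpair b c (by simp) (by simp) hbc⟩
  · -- inside V₁
    right
    refine ⟨0, 0, n / 3, Or.inl ⟨rfl, rfl, rfl⟩, ?_, ?_, ?_, ?_, by omega⟩
    · exact partn_eq0 _ _ (by
        have := iterE_subset_range (n / 3) _ he (Finset.mem_insert_self a {b, c})
        simpa using this)
    · exact partn_eq0 _ _ (by
        have := iterE_subset_range (n / 3) _ he (by simp : b ∈ ({a, b, c} : Finset ℕ))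
        simpa using this)
    · exact partn_eq0 _ _ (by
        have := iterE_subset_range (n / 3) _ he (by simp : c ∈ ({a, b, c} : Finset ℕ))
        simpa using this)
    · simp only [Nat.sub_zero]; exact he
  · -- inside V₂
    right
    have hbound : ∀ x ∈ ({a, b, c} : Finset ℕ), n / 3 ≤ x ∧ x < n / 3 + (n + 1) / 3 := by
      intro x hx
      rw [← heq] at hx
      simp only [Finset.mem_image] at hx
      obtain ⟨y, hy, rfl⟩ := hx
      have := iterE_subset_range _ _ he' hy
      rw [Finset.mem_range] at this
      omega
    have hA := hbound a (by simp)
    have hB := hbound b (by simp)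
    have hC := hbound c (by simp)
    refine ⟨1, n / 3, (n + 1) / 3, Or.inr (Or.inl ⟨rfl, rfl, rfl⟩),
      partn_eq1 _ _ hA.1 hA.2, partn_eq1 _ _ hB.1 hB.2, partn_eq1 _ _ hC.1 hC.2, ?_, by omega⟩
    have : ({a - n / 3, b - n / 3, c - n / 3} : Finset ℕ) = e' := by
      have h1 : ({a - n / 3, b - n / 3, c - n / 3} : Finset ℕ) =
          ({a, b, c} : Finset ℕ).image (· - n / 3) := by
        simp [Finset.image_insert]
      rw [h1, ← heq, Finset.image_image]
      have : ((· - n / 3) ∘ fun x => x + n / 3) = id := by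
        funext x; simp
      rw [this, Finset.image_id]
    rw [this]; exact he'
  · -- inside V₃
    right
    set s := n / 3 + (n + 1) / 3 with hs
    have hbound : ∀ x ∈ ({a, b, c} : Finset ℕ), s ≤ x := by
      intro x hx
      rw [← heq] at hx
      simp only [Finset.mem_image] at hx
      obtain ⟨y, hy, rfl⟩ := hx
      omega
    have hA := hbound a (by simp)
    have hB := hbound b (by simp)
    have hC := hbound c (by simp)
    refine ⟨2, s, (n + 2) / 3, Or.inr (Or.inr ⟨rfl, rfl, rfl⟩),
      partn_eq2 _ _ hA, partn_eq2 _ _ hB, partn_eq2 _ _ hC, ?_, by omega⟩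
    have : ({a - s, b - s, c - s} : Finset ℕ) = e' := by
      have h1 : ({a - s, b - s, c - s} : Finset ℕ) =
          ({a, b, c} : Finset ℕ).image (· - s) := by
        simp [Finset.image_insert]
      rw [h1, ← heq, Finset.image_image]
      have : ((· - s) ∘ fun x => x + s) = id := by
        funext x; simp
      rw [this, Finset.image_id]
    rw [this]; exact he'

/-- The iterated blow-up of a hyperedge contains no pseudo-cycle minus one
hyperedge of size `ℓ`, for any `ℓ ≥ 4` with `3 ∤ ℓ`. -/
theorem stmt9 (n ℓ : ℕ) (hℓ : 4 ≤ ℓ) (h3 : ¬ 3 ∣ ℓ) :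
    ¬ HasPseudoCycleMinus (iterE n) ℓ := by
  induction n using Nat.strong_induction_on with
  | _ n ih =>
    rintro ⟨v, hv⟩
    by_cases hn : n ≤ 2
    · have h0 := hv 0 (by omega)
      rw [iterE, dif_pos hn] at h0
      simp at h0
    -- setup
    set u : ℕ → ℕ := fun j => v (j % ℓ) with hu
    set q : ℕ → ℕ := fun j => partn n (u j) with hq
    have hmm : ∀ j, j % ℓ % ℓ = j % ℓ := fun j => Nat.mod_mod_of_dvd j dvd_rfl
    have hedge : ∀ i, i + 2 ≤ ℓ → ({u i, u (i + 1), u (i + 2)} : Finset ℕ) ∈ iterE n := by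
      intro i hi
      have h1 : i % ℓ = i := Nat.mod_eq_of_lt (by omega)
      have := hv i hi
      simpa [hu, h1] using this
    -- the dichotomy for each edge
    have hdich := fun i (hi : i + 2 ≤ ℓ) => edge_dichotomy n hn _ _ _ (hedge i hi)
    set Cross : ℕ → Prop := fun i =>
      q i ≠ q (i + 1) ∧ q i ≠ q (i + 2) ∧ q (i + 1) ≠ q (i + 2) with hC
    -- propagation
    have hprop : ∀ i, i + 3 ≤ ℓ → (Cross i ↔ Cross (i + 1)) := by
      intro i hi
      rcases hdich i (by omega) with h | ⟨k, s, m, _, ha, hb, hc, _, _⟩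
      · constructor
        · intro _
          rcases hdich (i + 1) (by omega) with h' | ⟨k, s, m, _, ha, hb, hc, _, _⟩
          · exact h'
          · exact absurd (ha.trans hb.symm) h.2.2
        · intro _; exact h
      · constructor
        · intro hcr; exact absurd (ha.trans hb.symm) hcr.1
        · intro hcr; exact absurd (hb.trans hc.symm) hcr.1
    have hAll : ∀ i, i + 2 ≤ ℓ → (Cross i ↔ Cross 0) := by
      intro i
      induction i with
      | zero => intro _; rfl
      | succ j ihj =>
        intro hi
        rw [← hprop j (by omega)]
        exact ihj (by omega)
    by_cases hc0 : Cross 0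
    · -- all edges crossing
      have hcr : ∀ i, i + 2 ≤ ℓ → Cross i := fun i hi => (hAll i hi).mpr hc0
      have hq3 : ∀ j, q j < 3 := fun j => partn_lt n (u j)
      have hstep : ∀ i, i + 3 ≤ ℓ → q (i + 3) = q i := by
        intro i hi
        have h1 := hcr i (by omega)
        have h2 := hcr (i + 1) (by omega)
        simp only [hC] at h1 h2
        rw [show i + 1 + 1 = i + 2 by omega, show i + 1 + 2 = i + 3 by omega] at h2
        have b0 := hq3 i; have b1 := hq3 (i + 1); have b2 := hq3 (i + 2); have b3 := hq3 (i + 3)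
        omega
      have hper : ∀ j, j ≤ ℓ → q j = q (j % 3) := by
        intro j
        induction j using Nat.strong_induction_on with
        | _ j ihj =>
          intro hj
          by_cases h3j : j < 3
          · rw [Nat.mod_eq_of_lt h3j]
          · have hj3 : j - 3 + 3 = j := by omega
            have := hstep (j - 3) (by omega)
            rw [hj3] at this
            rw [this, ihj (j - 3) (by omega) (by omega)]
            congr 1
            omega
      have hlast := hcr (ℓ - 2) (by omega)
      simp only [hC] at hlast
      have e2 : ℓ - 2 + 2 = ℓ := by omega
      have e1 : ℓ - 2 + 1 = ℓ - 1 := by omega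
      rw [e1, e2] at hlast
      have hql : q ℓ = q 0 := by
        simp only [hq, hu, Nat.mod_self, Nat.zero_mod]
      have hm12 : ℓ % 3 = 1 ∨ ℓ % 3 = 2 := by omega
      rcases hm12 with hm | hm
      · have := hper (ℓ - 1) (by omega)
        have hz : (ℓ - 1) % 3 = 0 := by omega
        rw [hz] at this
        exact hlast.2.2 (this.trans hql.symm)
      · have := hper (ℓ - 2) (by omega)
        have hz : (ℓ - 2) % 3 = 0 := by omega
        rw [hz] at this
        exact hlast.2.1 (this.trans hql.symm)
    · -- all edges internal
      have hni : ∀ i, i + 2 ≤ ℓ → ¬ Cross i := fun i hi hcr => hc0 ((hAll i hi).mp hcr)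
      rcases hdich 0 (by omega) with h00 | ⟨k, s, m, hkd, ha0, hb0, hc0', hm0, hmn⟩
      · exact hni 0 (by omega) h00
      have claim : ∀ i, i + 2 ≤ ℓ →
          q i = k ∧ q (i + 1) = k ∧ q (i + 2) = k ∧
          ({u i - s, u (i + 1) - s, u (i + 2) - s} : Finset ℕ) ∈ iterE m := by
        intro i
        induction i using Nat.strong_induction_on with
        | _ i ihi =>
          intro hi
          rcases hdich i hi with h | ⟨k', s', m', hkd', ha, hb, hc, hmem, _⟩
          · exact absurd h (hni i hi)
          · have hk' : k' = k := by
              match i, hi with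
              | 0, _ => exact ha.symm.trans ha0
              | (j + 1), hi =>
                have := (ihi j (by omega) (by omega)).2.1
                exact ha.symm.trans this
            have hsm : s' = s ∧ m' = m := by
              rcases hkd with ⟨h1, h2, h3⟩ | ⟨h1, h2, h3⟩ | ⟨h1, h2, h3⟩ <;>
                rcases hkd' with ⟨h1', h2', h3'⟩ | ⟨h1', h2', h3'⟩ | ⟨h1', h2', h3'⟩ <;>
                omega
            rw [hk'] at ha hb hc
            rw [hsm.1] at hmem
            rw [hsm.2] at hmem
            exact ⟨ha, hb, hc, hmem⟩
      refine ih m hmn ⟨fun j => u j - s, ?_⟩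
      intro i hi
      have hce := (claim i hi).2.2.2
      have h1 : (i + 1) % ℓ % ℓ = (i + 1) % ℓ := hmm _
      have h2 : (i + 2) % ℓ % ℓ = (i + 2) % ℓ := hmm _
      have hi1 : u ((i + 1) % ℓ) = u (i + 1) := by simp only [hu, h1]
      have hi2 : u ((i + 2) % ℓ) = u (i + 2) := by simp only [hu, h2]
      simpa [hu, hi1, hi2] using hce
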